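/- Let {G+k}_{k∈ℤ^n} be a tiling of ℝ^n by a compact tile G and let J ⊆ ℝ^n be a subspace. Then the minimal tile cylinder parallel to J is in fact invariant under all translations along L, the minimal rational subspace containing J. -/

import Mathlib

open MeasureTheory

/-- The real vector associated with an integer vector. -/
def intVec {n : ℕ} (k : Fin n → ℤ) : Fin n → ℝ := fun i => (k i : ℝ)

/-- The translate of a set by a vector. -/
def trSet {n : ℕ} (G : Set (Fin n → ℝ)) (v : Fin n → ℝ) : Set (Fin n → ℝ) :=
  (fun x => x + v) '' G

/-- `G` is a tile: a compact set of measure one whose integer translates cover `ℝⁿ`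
with pairwise overlaps of measure zero. -/
def IsTile {n : ℕ} (G : Set (Fin n → ℝ)) : Prop :=
  IsCompact G ∧ volume G = 1 ∧ (⋃ k : Fin n → ℤ, trSet G (intVec k)) = Set.univ ∧
    ∀ k : Fin n → ℤ, k ≠ 0 → volume (G ∩ trSet G (intVec k)) = 0

/-- A cylinder parallel to a subspace `J`: a closed nonempty set invariant under all
translations along `J`. -/
def IsCylinder {n : ℕ} (J : Submodule ℝ (Fin n → ℝ)) (C : Set (Fin n → ℝ)) : Prop :=
  IsClosed C ∧ C.Nonempty ∧ ∀ h ∈ J, (fun x => x + h) '' C = C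

/-- A tile cylinder: a cylinder which is a union of tiles of the tiling. -/
def IsTileCylinder {n : ℕ} (G : Set (Fin n → ℝ)) (J : Submodule ℝ (Fin n → ℝ))
    (C : Set (Fin n → ℝ)) : Prop :=
  IsCylinder J C ∧ ∃ E : Set (Fin n → ℤ), C = ⋃ k ∈ E, trSet G (intVec k)

/-- A minimal (by inclusion) tile cylinder parallel to `J`. -/
def IsMinTileCylinder {n : ℕ} (G : Set (Fin n → ℝ)) (J : Submodule ℝ (Fin n → ℝ))
    (C : Set (Fin n → ℝ)) : Prop :=
  IsTileCylinder G J C ∧ ∀ C', IsTileCylinder G J C' → C' ⊆ C → C' = C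

/-- A subspace of `ℝⁿ` is rational if it is spanned by finitely many integer vectors. -/
def IsRationalSubspace {n : ℕ} (L : Submodule ℝ (Fin n → ℝ)) : Prop :=
  ∃ T : Finset (Fin n → ℤ), L = Submodule.span ℝ (intVec '' ↑T)

/-! ### Auxiliary lemmas -/

section Aux

open Set Filter Topology Metric

variable {n : ℕ}

theorem tau_preim (A : Set (Fin n → ℝ)) (v : Fin n → ℝ) :
    (fun x => x + v) '' A = (fun x => x + (-v)) ⁻¹' A := by
  ext y
  constructor
  · rintro ⟨x, hx, rfl⟩; simpa
  · intro h; exact ⟨y + -v, h, neg_add_cancel_right y v⟩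

theorem tau_vol (A : Set (Fin n → ℝ)) (v : Fin n → ℝ) :
    volume ((fun x => x + v) '' A) = volume A := by
  rw [tau_preim, measure_preimage_add_right]

theorem tau_comp (A : Set (Fin n → ℝ)) (v w : Fin n → ℝ) :
    (fun x => x + w) '' ((fun x => x + v) '' A) = (fun x => x + (v + w)) '' A := by
  rw [← Set.image_comp]; apply congrFun; apply congrArg; funext x
  simp [Function.comp, add_assoc]

theorem tau_inter (A B : Set (Fin n → ℝ)) (v : Fin n → ℝ) :
    (fun x => x + v) '' (A ∩ B) = ((fun x => x + v) '' A) ∩ ((fun x => x + v) '' B) :=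
  Set.image_inter (add_left_injective v)

theorem tau_zero (A : Set (Fin n → ℝ)) : (fun x => x + (0 : Fin n → ℝ)) '' A = A := by simp

theorem trSet_zero (G : Set (Fin n → ℝ)) : trSet G (0 : Fin n → ℝ) = G := tau_zero G

theorem intVec_add (a b : Fin n → ℤ) : intVec (a + b) = intVec a + intVec b := by
  funext i; simp [intVec]

theorem intVec_neg (a : Fin n → ℤ) : intVec (-a) = -intVec a := by funext i; simp [intVec]

theorem intVec_sub (a b : Fin n → ℤ) : intVec (a - b) = intVec a - intVec b := by
  funext i; simp [intVec]

theorem intVec_inj : Function.Injective (intVec (n := n)) := by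
  intro a b h
  funext i
  have : ((a i : ℝ)) = (b i : ℝ) := congrFun h i
  exact_mod_cast this

theorem trSet_tau (G : Set (Fin n → ℝ)) (v w : Fin n → ℝ) :
    (fun x => x + w) '' trSet G v = trSet G (v + w) := tau_comp G v w

theorem trSet_meas {G : Set (Fin n → ℝ)} (hG : IsCompact G) (v : Fin n → ℝ) :
    MeasurableSet (trSet G v) := by
  have : IsCompact (trSet G v) := hG.image (by continuity)
  exact this.isClosed.measurableSet

theorem tiles_disjoint {G : Set (Fin n → ℝ)} (hG : IsTile G) {a b : Fin n → ℤ} (hab : a ≠ b) :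
    volume (trSet G (intVec a) ∩ trSet G (intVec b)) = 0 := by
  have h := tau_vol (trSet G (intVec a) ∩ trSet G (intVec b)) (-(intVec a))
  rw [tau_inter, trSet_tau, trSet_tau] at h
  rw [← h]
  have e1 : intVec a + -intVec a = 0 := by abel
  have e2 : intVec b + -intVec a = intVec (b - a) := by rw [intVec_sub]; abel
  rw [e1, e2]
  have : trSet G (0 : Fin n → ℝ) = G := tau_zero G
  rw [this]
  exact hG.2.2.2 (b - a) (sub_ne_zero.mpr (Ne.symm hab))

theorem vol_G_ne_top {G : Set (Fin n → ℝ)} (hG : IsTile G) : volume G ≠ ⊤ := by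
  rw [hG.2.1]; simp

theorem small_overlap {G : Set (Fin n → ℝ)} (hG : IsTile G) :
    ∃ ε > 0, ∀ s : Fin n → ℝ, ‖s‖ < ε → 0 < volume (G ∩ trSet G s) := by
  obtain ⟨U, hGU, hUo, hU⟩ := Set.exists_isOpen_lt_add G (vol_G_ne_top hG)
    (ε := 1/2) (by norm_num)
  obtain ⟨δ, δpos, hδ⟩ := hG.1.exists_thickening_subset_open hUo hGU
  refine ⟨δ, δpos, fun s hs => ?_⟩
  have hsub : trSet G s ⊆ U := by
    rintro x ⟨g, hg, rfl⟩
    apply hδ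
    rw [Metric.mem_thickening_iff]
    exact ⟨g, hg, by simpa [dist_eq_norm] using hs⟩
  have hT : MeasurableSet (trSet G s) := trSet_meas hG.1 s
  have key : volume (G ∪ trSet G s) + volume (G ∩ trSet G s) = volume G + volume (trSet G s) :=
    measure_union_add_inter G hT
  have hvols : volume (trSet G s) = 1 := by rw [trSet, tau_vol, hG.2.1]
  rw [pos_iff_ne_zero]
  intro h0
  rw [h0, add_zero, hG.2.1, hvols] at key
  have : volume (G ∪ trSet G s) ≤ volume U := measure_mono (Set.union_subset hGU hsub)
  rw [key] at this
  rw [hG.2.1] at hU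
  have h2 : (2:ENNReal) < 1 + 2⁻¹ := by
    have := lt_of_le_of_lt this hU
    rw [one_add_one_eq_two] at this
    convert this using 2
    norm_num
  have h3 : (1:ENNReal) + 2⁻¹ ≤ 2 := by
    have : (2:ENNReal)⁻¹ ≤ 1 := by simp [ENNReal.inv_le_one]
    calc (1:ENNReal) + 2⁻¹ ≤ 1 + 1 := add_le_add_right this 1
    _ = 2 := one_add_one_eq_two
  exact absurd (lt_of_lt_of_le h2 h3) (lt_irrefl _)

theorem tau_neg_cancel (C : Set (Fin n → ℝ)) {t : Fin n → ℝ}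
    (ht : (fun x => x + t) '' C = C) : (fun x => x + (-t)) '' C = C := by
  conv_lhs => rw [← ht]
  rw [tau_comp, add_neg_cancel, tau_zero]

theorem mem_E_iff {G : Set (Fin n → ℝ)} (hG : IsTile G) {C : Set (Fin n → ℝ)}
    {E : Set (Fin n → ℤ)} (hE : C = ⋃ k ∈ E, trSet G (intVec k)) (m : Fin n → ℤ) :
    m ∈ E ↔ 0 < volume (trSet G (intVec m) ∩ C) := by
  constructor
  · intro hm
    have hsub : trSet G (intVec m) ⊆ C := by
      rw [hE]; exact Set.subset_biUnion_of_mem (u := fun k => trSet G (intVec k)) hm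
    rw [Set.inter_eq_left.mpr hsub, trSet, tau_vol, hG.2.1]
    norm_num
  · intro hpos
    by_contra hm
    have hz : volume (trSet G (intVec m) ∩ C) = 0 := by
      have hsub : trSet G (intVec m) ∩ C ⊆
          ⋃ e ∈ E, (trSet G (intVec m) ∩ trSet G (intVec e)) := by
        rw [hE]
        intro x ⟨hx1, hx2⟩
        simp only [Set.mem_iUnion] at hx2 ⊢
        obtain ⟨e, he, hxe⟩ := hx2
        exact ⟨e, he, hx1, hxe⟩
      refine measure_mono_null hsub ?_
      refine (measure_biUnion_null_iff (Set.to_countable E)).mpr (fun e he => ?_)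
      exact tiles_disjoint hG (fun hme => hm (hme ▸ he))
    rw [hz] at hpos; exact lt_irrefl _ hpos

theorem lemA1 {G : Set (Fin n → ℝ)} (hG : IsTile G) {C : Set (Fin n → ℝ)}
    {E : Set (Fin n → ℤ)} (hE : C = ⋃ k ∈ E, trSet G (intVec k)) {ε : ℝ}
    (hε : ∀ s : Fin n → ℝ, ‖s‖ < ε → 0 < volume (G ∩ trSet G s))
    {t : Fin n → ℝ} (ht : (fun x => x + t) '' C = C)
    {k : Fin n → ℤ} (hk : ‖t + intVec k‖ < ε) :
    ∀ m ∈ E, m + k ∈ E := by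
  intro m hm
  rw [mem_E_iff hG hE]
  have hmt : (fun x => x + (-t)) '' C = C := tau_neg_cancel C ht
  have key : volume (trSet G (intVec (m + k)) ∩ C)
      = volume ((fun x => x + t) '' trSet G (intVec (m + k)) ∩ C) := by
    conv_lhs => rw [← hmt]
    rw [show trSet G (intVec (m+k)) ∩ (fun x => x + (-t)) '' C
        = (fun x => x + (-t)) '' (((fun x => x + t) '' trSet G (intVec (m + k))) ∩ C) by
      rw [tau_inter, tau_comp, add_neg_cancel, tau_zero]]
    rw [tau_vol]
  rw [key, trSet_tau]
  have hsub : trSet G (intVec m) ⊆ C := by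
    rw [hE]; exact Set.subset_biUnion_of_mem (u := fun k => trSet G (intVec k)) hm
  refine lt_of_lt_of_le ?_ (measure_mono (Set.inter_subset_inter_right _ hsub))
  have e1 : intVec (m + k) + t = intVec m + (t + intVec k) := by rw [intVec_add]; abel
  rw [e1]
  have e2 : volume (trSet G (intVec m + (t + intVec k)) ∩ trSet G (intVec m))
      = volume (trSet G (t + intVec k) ∩ G) := by
    have h3 := tau_vol (trSet G (intVec m + (t + intVec k)) ∩ trSet G (intVec m)) (-(intVec m))
    rw [tau_inter, trSet_tau, trSet_tau,
      show intVec m + (t + intVec k) + -intVec m = t + intVec k from by abel,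
      add_neg_cancel, trSet_zero] at h3
    exact h3.symm
  rw [e2, Set.inter_comm]
  exact hε _ hk

theorem lemA {G : Set (Fin n → ℝ)} (hG : IsTile G) {C : Set (Fin n → ℝ)}
    {E : Set (Fin n → ℤ)} (hE : C = ⋃ k ∈ E, trSet G (intVec k)) {ε : ℝ}
    (hε : ∀ s : Fin n → ℝ, ‖s‖ < ε → 0 < volume (G ∩ trSet G s))
    {t : Fin n → ℝ} (ht : (fun x => x + t) '' C = C)
    {k : Fin n → ℤ} (hk : ‖t + intVec k‖ < ε) :
    (fun x => x + intVec k) '' C = C := by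
  have h1 := lemA1 hG hE hε ht hk
  have hmt : (fun x => x + (-t)) '' C = C := tau_neg_cancel C ht
  have hk2 : ‖(-t) + intVec (-k)‖ < ε := by
    rw [intVec_neg, show -t + -intVec k = -(t + intVec k) by abel, norm_neg]; exact hk
  have h2 := lemA1 hG hE hε hmt hk2
  apply Set.Subset.antisymm
  · rintro x ⟨y, hy, rfl⟩
    rw [hE] at hy
    simp only [Set.mem_iUnion] at hy
    obtain ⟨m, hm, hym⟩ := hy
    have : y + intVec k ∈ trSet G (intVec (m + k)) := by
      obtain ⟨g, hg, rfl⟩ := hym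
      exact ⟨g, hg, by rw [intVec_add, add_assoc]⟩
    have hsub : trSet G (intVec (m + k)) ⊆ C := by
      rw [hE]
      exact Set.subset_biUnion_of_mem (u := fun k => trSet G (intVec k)) (h1 m hm)
    exact hsub this
  · intro x hx
    rw [hE] at hx
    simp only [Set.mem_iUnion] at hx
    obtain ⟨m, hm, hxm⟩ := hx
    have hmk : m + -k ∈ E := h2 m hm
    have : trSet G (intVec m) = (fun z => z + intVec k) '' trSet G (intVec (m + -k)) := by
      rw [trSet_tau, ← intVec_add, neg_add_cancel_right]
    rw [this] at hxm
    obtain ⟨y, hy, rfl⟩ := hxm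
    refine ⟨y, ?_, rfl⟩
    rw [hE]
    exact Set.subset_biUnion_of_mem (u := fun k => trSet G (intVec k)) hmk hy

theorem pigeon (v : Fin n → ℝ) {δ : ℝ} (hδ : 0 < δ) :
    ∃ p : ℕ, 0 < p ∧ ∃ k : Fin n → ℤ, ‖(p : ℝ) • v - intVec k‖ < δ := by
  set Q : ℕ := ⌈1/δ⌉₊ + 1 with hQ
  have hQpos : (0:ℝ) < Q := by positivity
  have hQδ : 1/(Q:ℝ) ≤ δ := by
    rw [div_le_iff₀ hQpos]
    have h1 : 1/δ ≤ (Q:ℝ) := le_trans (Nat.le_ceil _) (by exact_mod_cast Nat.le_succ _)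
    calc (1:ℝ) = δ * (1/δ) := by field_simp
    _ ≤ δ * Q := by nlinarith
  have hfr : ∀ (m : ℕ) (i : Fin n), ⌊Int.fract ((m:ℝ) * v i) * Q⌋₊ < Q := by
    intro m i
    rw [Nat.floor_lt (mul_nonneg (Int.fract_nonneg _) hQpos.le)]
    have := Int.fract_lt_one ((m:ℝ) * v i)
    nlinarith
  set g : ℕ → (Fin n → Fin Q) := fun m i => ⟨⌊Int.fract ((m:ℝ) * v i) * Q⌋₊, hfr m i⟩ with hg
  obtain ⟨m₁, m₂, hne, heq⟩ := Finite.exists_ne_map_eq_of_infinite g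
  wlog hlt : m₁ < m₂ generalizing m₁ m₂
  · exact this m₂ m₁ hne.symm heq.symm (by omega)
  refine ⟨m₂ - m₁, by omega, fun i => ⌊(m₂:ℝ) * v i⌋ - ⌊(m₁:ℝ) * v i⌋, ?_⟩
  rw [pi_norm_lt_iff hδ]
  intro i
  have hgi : (⌊Int.fract ((m₁:ℝ) * v i) * Q⌋₊ : ℝ) = (⌊Int.fract ((m₂:ℝ) * v i) * Q⌋₊ : ℝ) := by
    have := congrFun heq i
    rw [hg] at this
    simp only [Fin.mk.injEq] at this
    exact_mod_cast this
  set a := Int.fract ((m₂:ℝ) * v i)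
  set b := Int.fract ((m₁:ℝ) * v i)
  have hab : |a - b| < 1/(Q:ℝ) := by
    rw [abs_lt]
    have h1 : a * Q < ⌊a * Q⌋₊ + 1 := Nat.lt_floor_add_one _
    have h2 : (⌊a * Q⌋₊ : ℝ) ≤ a * Q := Nat.floor_le (mul_nonneg (Int.fract_nonneg _) hQpos.le)
    have h3 : b * Q < ⌊b * Q⌋₊ + 1 := Nat.lt_floor_add_one _
    have h4 : (⌊b * Q⌋₊ : ℝ) ≤ b * Q := Nat.floor_le (mul_nonneg (Int.fract_nonneg _) hQpos.le)
    constructor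
    · rw [neg_lt, lt_div_iff₀ hQpos]; nlinarith
    · rw [lt_div_iff₀ hQpos]; nlinarith
  have hval : ((m₂ - m₁ : ℕ) : ℝ) • v i - ((⌊(m₂:ℝ) * v i⌋ - ⌊(m₁:ℝ) * v i⌋ : ℤ) : ℝ) = a - b := by
    have hc : ((m₂ - m₁ : ℕ) : ℝ) = (m₂ : ℝ) - (m₁ : ℝ) := by
      rw [Nat.cast_sub (le_of_lt hlt)]
    rw [hc]
    have ha : a = (m₂:ℝ) * v i - ⌊(m₂:ℝ) * v i⌋ := (Int.self_sub_floor _).symm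
    have hb : b = (m₁:ℝ) * v i - ⌊(m₁:ℝ) * v i⌋ := (Int.self_sub_floor _).symm
    rw [ha, hb]
    push_cast
    ring_nf
  have : (((m₂ - m₁ : ℕ) : ℝ) • v - intVec fun i => ⌊(m₂:ℝ) * v i⌋ - ⌊(m₁:ℝ) * v i⌋) i
      = a - b := by
    simpa [intVec] using hval
  rw [this, Real.norm_eq_abs]
  exact lt_of_lt_of_le hab hQδ

theorem thmT (d : ℕ) : ∀ (E : Type) [NormedAddCommGroup E] [NormedSpace ℝ E]
    [FiniteDimensional ℝ E], Module.finrank ℝ E ≤ d → ∀ (H : AddSubgroup E),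
    IsClosed (H : Set E) → ∃ ε > 0, ∀ h ∈ H, ‖h‖ < ε → ∀ r : ℝ, r • h ∈ H := by
  induction d with
  | zero =>
    intro E _ _ _ hrank H _
    refine ⟨1, one_pos, fun h hh hn r => ?_⟩
    haveI : Subsingleton E := by
      rw [Nat.le_zero] at hrank
      exact Module.finrank_zero_iff.mp hrank
    rw [Subsingleton.elim (r • h) h]
    exact hh
  | succ d IH =>
    intro E _ _ _ hrank H hHcl
    by_cases hA : ∃ ε > 0, ∀ h ∈ H, ‖h‖ < ε → ∀ r : ℝ, r • h ∈ H
    · exact hA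
    push_neg at hA
    have hseq : ∀ i : ℕ, ∃ h ∈ H, ‖h‖ < 1/(i+1) ∧ h ≠ 0 := by
      intro i
      obtain ⟨h, hh, hn, r, hr⟩ := hA (1/(i+1)) (by positivity)
      refine ⟨h, hh, hn, fun h0 => hr ?_⟩
      rw [h0, smul_zero]; exact H.zero_mem
    choose h hmem hnorm hne using hseq
    set u : ℕ → E := fun i => ‖h i‖⁻¹ • h i with hu
    have husph : ∀ i, u i ∈ sphere (0:E) 1 := by
      intro i
      rw [mem_sphere_zero_iff_norm, norm_smul, norm_inv, norm_norm,
        inv_mul_cancel₀ (norm_ne_zero_iff.mpr (hne i))]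
    obtain ⟨a, hasph, φ, hφ, hconv⟩ := (isCompact_sphere (0:E) 1).tendsto_subseq husph
    have hna : ‖a‖ = 1 := mem_sphere_zero_iff_norm.mp hasph
    have hane : a ≠ 0 := norm_ne_zero_iff.mp (by rw [hna]; norm_num)
    have hline : ∀ r : ℝ, r • a ∈ H := by
      intro r
      set w : ℕ → E := fun i => ((⌊r / ‖h (φ i)‖⌋ : ℤ) : ℝ) • h (φ i) with hw
      have hwmem : ∀ i, w i ∈ H := by
        intro i
        rw [hw]
        simp only
        rw [Int.cast_smul_eq_zsmul]
        exact AddSubgroup.zsmul_mem H (hmem _) _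
      have hbound : ∀ i, ‖w i - r • a‖ ≤ ‖h (φ i)‖ + |r| * ‖u (φ i) - a‖ := by
        intro i
        set c : ℝ := r / ‖h (φ i)‖
        have hch : c • h (φ i) = r • u (φ i) := by
          rw [hu]; simp only
          rw [smul_smul]
          congr 1
        have : w i - r • a = ((⌊c⌋ : ℝ) - c) • h (φ i) + r • (u (φ i) - a) := by
          rw [hw]; simp only
          rw [sub_smul, smul_sub, hch]; abel
        rw [this]
        refine le_trans (norm_add_le _ _) (add_le_add ?_ ?_)
        · rw [norm_smul, Real.norm_eq_abs]
          have h1 : |(⌊c⌋ : ℝ) - c| ≤ 1 := by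
            rw [abs_sub_comm, abs_of_nonneg (by linarith [Int.floor_le c])]
            linarith [Int.sub_one_lt_floor c]
          nlinarith [norm_nonneg (h (φ i)), abs_nonneg ((⌊c⌋ : ℝ) - c)]
        · rw [norm_smul, Real.norm_eq_abs]
      have l1 : Tendsto (fun i => ‖h (φ i)‖) atTop (𝓝 0) := by
        apply squeeze_zero (fun i => norm_nonneg _) (g := fun i : ℕ => 1/((i:ℝ)+1))
        · intro i
          refine le_trans (le_of_lt (hnorm (φ i))) ?_
          have h6 : (i:ℝ) + 1 ≤ (φ i : ℝ) + 1 := by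
            have h9 : i ≤ φ i := hφ.le_apply
            have : (i:ℝ) ≤ (φ i : ℝ) := by exact_mod_cast h9
            linarith
          exact div_le_div_of_nonneg_left one_pos.le (by positivity) h6
        · exact tendsto_one_div_add_atTop_nhds_zero_nat
      have l2 : Tendsto (fun i => |r| * ‖u (φ i) - a‖) atTop (𝓝 0) := by
        have h7 : Tendsto (fun i => (u ∘ φ) i - a) atTop (𝓝 0) :=
          tendsto_sub_nhds_zero_iff.mpr hconv
        have h8 := h7.norm
        rw [norm_zero] at h8
        simpa using h8.const_mul |r|
      have hto : Tendsto (fun i => w i - r • a) atTop (𝓝 0) := by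
        apply squeeze_zero_norm hbound
        simpa using l1.add l2
      have hwto : Tendsto w atTop (𝓝 (r • a)) := tendsto_sub_nhds_zero_iff.mp hto
      exact hHcl.mem_of_tendsto hwto (Filter.Eventually.of_forall hwmem)
    set S : Submodule ℝ E := ℝ ∙ a with hS
    have hSsub : (S : Set E) ⊆ (H : Set E) := by
      intro x hx
      obtain ⟨c, rfl⟩ := Submodule.mem_span_singleton.mp hx
      exact hline c
    haveI : IsClosed (S : Set E) := S.closed_of_finiteDimensional
    set π : E →ₗ[ℝ] E ⧸ S := S.mkQ with hπ
    set H' : AddSubgroup (E ⧸ S) := H.map π.toAddMonoidHom with hH'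
    have hH'cl : IsClosed (H' : Set (E ⧸ S)) := by
      rw [← isOpen_compl_iff]
      have himg : (H' : Set (E ⧸ S))ᶜ = Submodule.Quotient.mk '' (H : Set E)ᶜ := by
        ext x
        obtain ⟨y, rfl⟩ := Submodule.Quotient.mk_surjective S x
        constructor
        · intro hx
          refine ⟨y, fun hy => hx ⟨y, hy, rfl⟩, rfl⟩
        · rintro ⟨z, hz, hzeq⟩ ⟨g, hg, hgeq⟩
          apply hz
          have : z - g ∈ S := by
            rw [← Submodule.Quotient.eq]
            exact hzeq.trans hgeq.symm
          have : z - g ∈ H := hSsub this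
          have hzg : z = (z - g) + g := by abel
          rw [hzg]; exact H.add_mem ‹z - g ∈ H› hg
      rw [himg]
      exact QuotientAddGroup.isOpenMap_coe _ hHcl.isOpen_compl
    have hrank' : Module.finrank ℝ (E ⧸ S) ≤ d := by
      have h1 := Submodule.finrank_quotient_add_finrank S
      have h2 : Module.finrank ℝ S = 1 := finrank_span_singleton hane
      omega
    obtain ⟨ε, hεpos, hε⟩ := IH (E ⧸ S) hrank' H' hH'cl
    refine ⟨ε, hεpos, fun x hx hnx r => ?_⟩
    have hmkx : (Submodule.Quotient.mk x : E ⧸ S) ∈ H' := ⟨x, hx, rfl⟩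
    have hmknorm : ‖(Submodule.Quotient.mk x : E ⧸ S)‖ < ε :=
      lt_of_le_of_lt (Submodule.Quotient.norm_mk_le S x) hnx
    have := hε _ hmkx hmknorm r
    rw [← Submodule.Quotient.mk_smul] at this
    obtain ⟨z, hz, hzeq⟩ := this
    have hzS : r • x - z ∈ S := by
      rw [← Submodule.Quotient.eq]
      exact hzeq.symm
    have hrx : r • x = (r • x - z) + z := by abel
    rw [hrx]
    exact H.add_mem (hSsub hzS) hz

/-- A finite integer generating subset can be extracted from any integer generating set. -/
theorem exists_finset_rational (s : Set (Fin n → ℤ)) :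
    ∃ T : Finset (Fin n → ℤ),
      Submodule.span ℝ (intVec '' ↑T) = Submodule.span ℝ (intVec '' s) := by
  classical
  set W := Submodule.span ℝ (intVec '' s) with hW
  obtain ⟨U, hU⟩ := IsNoetherian.noetherian W
  have hgen : ∀ u : {x // x ∈ U}, (u : Fin n → ℝ) ∈ W := by
    intro u
    rw [← hU]
    exact Submodule.subset_span u.2
  have hmem : ∀ u : {x // x ∈ U}, ∃ F : Finset (Fin n → ℝ),
      ↑F ⊆ intVec '' s ∧ (u : Fin n → ℝ) ∈ Submodule.span ℝ (↑F : Set _) := by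
    intro u
    exact Submodule.mem_span_finite_of_mem_span (hgen u)
  choose F hFsub hFmem using hmem
  set Ftot : Finset (Fin n → ℝ) := U.attach.biUnion F with hFtot
  have hFtotsub : (↑Ftot : Set (Fin n → ℝ)) ⊆ intVec '' s := by
    intro y hy
    rw [hFtot] at hy
    simp only [Finset.coe_biUnion, Set.mem_iUnion] at hy
    obtain ⟨x, _, hx2⟩ := hy
    exact hFsub _ hx2
  have hspan : Submodule.span ℝ (↑Ftot : Set (Fin n → ℝ)) = W := by
    apply le_antisymm
    · rw [Submodule.span_le]
      exact le_trans hFtotsub Submodule.subset_span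
    · conv_lhs => rw [← hU]
      rw [Submodule.span_le]
      intro y hy
      have := hFmem ⟨y, hy⟩
      refine Submodule.span_mono ?_ this
      intro z hz
      rw [hFtot]
      simp only [Finset.coe_biUnion, Set.mem_iUnion]
      exact ⟨⟨y, hy⟩, Finset.mem_attach _ _, hz⟩
  have hrange : (↑Ftot : Set (Fin n → ℝ)) ⊆ Set.range intVec :=
    le_trans hFtotsub (Set.image_subset_range _ _)
  have hinjon : Set.InjOn intVec (intVec ⁻¹' (↑Ftot : Set (Fin n → ℝ))) := intVec_inj.injOn
  refine ⟨Ftot.preimage intVec hinjon, ?_⟩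
  rw [Finset.coe_preimage, Set.image_preimage_eq_of_subset hrange, hspan]

end Aux

/-- a minimal tile cylinder parallel to `J` is invariant under all
translations along the minimal rational subspace `L` containing `J`. -/
theorem stmt10 {n : ℕ} (G : Set (Fin n → ℝ)) (hG : IsTile G)
    (J L : Submodule ℝ (Fin n → ℝ))
    (hLrat : IsRationalSubspace L) (hJL : J ≤ L)
    (hLmin : ∀ L' : Submodule ℝ (Fin n → ℝ), IsRationalSubspace L' → J ≤ L' → L ≤ L')
    (C : Set (Fin n → ℝ)) (hC : IsMinTileCylinder G J C) :
    ∀ h ∈ L, (fun x => x + h) '' C = C := by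
  classical
  obtain ⟨⟨⟨hCcl, hCne, hCinv⟩, E, hE⟩, _hmin⟩ := hC
  obtain ⟨ε, hεpos, hε⟩ := small_overlap hG
  -- the stabilizer of C is a closed subgroup
  set S : AddSubgroup (Fin n → ℝ) :=
    { carrier := {h | (fun x => x + h) '' C = C}
      zero_mem' := tau_zero C
      add_mem' := by
        intro a b ha hb
        show (fun x => x + (a + b)) '' C = C
        rw [← tau_comp C a b]
        rw [show (fun x => x + a) '' C = C from ha, show (fun x => x + b) '' C = C from hb]
      neg_mem' := by
        intro a ha
        exact tau_neg_cancel C ha } with hSdef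
  have hScl : IsClosed (S : Set (Fin n → ℝ)) := by
    apply IsSeqClosed.isClosed
    intro x p hx hlim
    show (fun z => z + p) '' C = C
    apply Set.Subset.antisymm
    · rintro y ⟨c, hc, rfl⟩
      have hmemseq : ∀ i, c + x i ∈ C := by
        intro i
        have hxi : (fun z => z + x i) '' C = C := hx i
        rw [← hxi]
        exact ⟨c, hc, rfl⟩
      have hlim2 : Filter.Tendsto (fun i => c + x i) Filter.atTop (nhds (c + p)) := by
        have := (tendsto_const_nhds (x := c) (f := Filter.atTop (α := ℕ))).add hlim
        simpa using this
      have : c + p ∈ C := hCcl.mem_of_tendsto hlim2 (Filter.Eventually.of_forall hmemseq)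
      simpa using this
    · intro y hy
      have hmemseq : ∀ i, y - x i ∈ C := by
        intro i
        have hy' := hy
        rw [← hx i] at hy'
        obtain ⟨c, hc, hceq⟩ := hy'
        have : y - x i = c := by rw [← hceq]; exact add_sub_cancel_right c (x i)
        rw [this]; exact hc
      have hlim2 : Filter.Tendsto (fun i => y - x i) Filter.atTop (nhds (y - p)) := by
        have := (tendsto_const_nhds (x := y) (f := Filter.atTop (α := ℕ))).sub hlim
        simpa using this
      have hyp : y - p ∈ C := hCcl.mem_of_tendsto hlim2 (Filter.Eventually.of_forall hmemseq)
      exact ⟨y - p, hyp, sub_add_cancel y p⟩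
  have hJS : ∀ t ∈ J, t ∈ S := fun t ht => hCinv t ht
  have hSk : ∀ t ∈ S, ∀ k : Fin n → ℤ, ‖t + intVec k‖ < ε → intVec k ∈ S :=
    fun t ht k hk => lemA hG hE hε ht hk
  obtain ⟨ε₀, hε₀pos, hε₀⟩ := thmT n (Fin n → ℝ)
    (le_of_eq (Module.finrank_fin_fun ℝ)) S hScl
  -- the largest subspace contained in S
  set V : Submodule ℝ (Fin n → ℝ) :=
    { carrier := {x | ∀ r : ℝ, r • x ∈ S}
      zero_mem' := fun r => by rw [smul_zero]; exact S.zero_mem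
      add_mem' := by
        intro a b ha hb r
        rw [smul_add]; exact S.add_mem (ha r) (hb r)
      smul_mem' := by
        intro c x hx r
        rw [smul_smul]; exact hx (r * c) } with hVdef
  have hVS : ∀ x ∈ V, x ∈ S := by
    intro x hx
    have := hx 1
    rwa [one_smul] at this
  have hJV : J ≤ V := by
    intro t ht r
    exact hJS _ (J.smul_mem r ht)
  -- V is spanned by its integer vectors
  set A : Set (Fin n → ℤ) := {k | intVec k ∈ V} with hA
  set W : Submodule ℝ (Fin n → ℝ) := Submodule.span ℝ (intVec '' A) with hWdef
  have hWV : W ≤ V := by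
    rw [hWdef, Submodule.span_le]
    rintro y ⟨k, hk, rfl⟩
    exact hk
  have hVW : V ≤ W := by
    intro v hv
    have hWcl : IsClosed (W : Set (Fin n → ℝ)) := W.closed_of_finiteDimensional
    have hvcl : v ∈ closure (W : Set (Fin n → ℝ)) := by
      rw [Metric.mem_closure_iff]
      intro δ hδ
      have hδ'pos : 0 < min δ (min ε ε₀) := lt_min hδ (lt_min hεpos hε₀pos)
      obtain ⟨p, hp, k, hpk⟩ := pigeon v hδ'pos
      have hppos : (0:ℝ) < p := by exact_mod_cast hp
      have hpV : (p:ℝ) • v ∈ V := V.smul_mem _ hv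
      have hnegS : -((p:ℝ) • v) ∈ S := S.neg_mem (hVS _ hpV)
      have hkS : intVec k ∈ S := by
        apply hSk _ hnegS k
        rw [neg_add_eq_sub, norm_sub_rev]
        exact lt_of_lt_of_le hpk (le_trans (min_le_right _ _) (min_le_left _ _))
      have hdiffS : intVec k - (p:ℝ) • v ∈ S := S.sub_mem hkS (hVS _ hpV)
      have hdiffnorm : ‖intVec k - (p:ℝ) • v‖ < ε₀ := by
        rw [norm_sub_rev]
        exact lt_of_lt_of_le hpk (le_trans (min_le_right _ _) (min_le_right _ _))
      have hdiffV : intVec k - (p:ℝ) • v ∈ V := fun r => hε₀ _ hdiffS hdiffnorm r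
      have hkV : intVec k ∈ V := by
        have := V.add_mem hdiffV hpV
        rwa [sub_add_cancel] at this
      have hkW : intVec k ∈ W := by
        rw [hWdef]
        exact Submodule.subset_span ⟨k, hkV, rfl⟩
      refine ⟨(p:ℝ)⁻¹ • intVec k, W.smul_mem _ hkW, ?_⟩
      rw [dist_eq_norm]
      have heq2 : v - (p:ℝ)⁻¹ • intVec k = (p:ℝ)⁻¹ • ((p:ℝ) • v - intVec k) := by
        rw [smul_sub, smul_smul, inv_mul_cancel₀ (ne_of_gt hppos), one_smul]
      rw [heq2, norm_smul, Real.norm_eq_abs, abs_of_pos (inv_pos.mpr hppos)]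
      have hinvle : (p:ℝ)⁻¹ ≤ 1 := by
        rw [inv_le_one_iff₀]
        right
        exact_mod_cast hp
      have hnn : (0:ℝ) ≤ ‖(p:ℝ) • v - intVec k‖ := norm_nonneg _
      have hlt : ‖(p:ℝ) • v - intVec k‖ < δ :=
        lt_of_lt_of_le hpk (min_le_left _ _)
      nlinarith
    rwa [hWcl.closure_eq] at hvcl
  have hVeq : V = W := le_antisymm hVW hWV
  obtain ⟨T, hT⟩ := exists_finset_rational A
  have hVrat : IsRationalSubspace V := ⟨T, by rw [hVeq, hWdef, ← hT]⟩
  have hLV : L ≤ V := hLmin V hVrat hJV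
  intro h hh
  exact hVS h (hLV hh)
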